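/- Let K be a field, let n ≥ 1 and r ≥ 0 be integers, and let q ∈ K with q ≠ 0 and q^j ≠ 1 for all j = 1, …, n. Then ∑_{k=1}^n (−1)^k [n choose k]_q · q^{C(k,2) − (n−1)k} · S_k({1}^r; q)/(1 − q^k) = −∑_{k=1}^n q^{rk}/(1 − q^k)^{r+1}. -/

import Mathlib

/-- The Gaussian binomial coefficient `[m choose k]_q`, defined as
`((1−q^m)(1−q^{m−1})⋯(1−q^{m−k+1}))/((1−q^k)(1−q^{k−1})⋯(1−q))` for `0 ≤ k ≤ m`,
and `0` otherwise. -/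
def qbin {K : Type*} [Field K] (q : K) (m k : ℕ) : K :=
  if k ≤ m then
    (∏ i ∈ Finset.range k, (1 - q ^ (m - i))) / (∏ i ∈ Finset.range k, (1 - q ^ (i + 1)))
  else 0

/-- The `q`-analog of the non-strict multiple harmonic sum:
`S_n({t}^r; q) = ∑_{1 ≤ j₁ ≤ ⋯ ≤ j_r ≤ n} q^{j₁+⋯+j_r}/((1−q^{j₁})^t ⋯ (1−q^{j_r})^t)`,
defined by recursion on the number `r` of indices (summing over the largest index `j_r`). -/
def mhsq {K : Type*} [Field K] (q : K) (t : ℕ) : ℕ → ℕ → K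
  | 0, _ => 1
  | r + 1, n => ∑ j ∈ Finset.Icc 1 n, q ^ j / (1 - q ^ j) ^ t * mhsq q t r j

namespace Aux16
open Finset

variable {K : Type*} [Field K] {q : K}

lemma den_ne {n : ℕ} (hq : ∀ j, 1 ≤ j → j ≤ n → q ^ j ≠ 1) {k : ℕ} (hk : k ≤ n) :
    (∏ i ∈ range k, (1 - q ^ (i + 1))) ≠ 0 := by
  apply prod_ne_zero_iff.mpr
  intro i hi
  simp only [mem_range] at hi
  exact sub_ne_zero.mpr (Ne.symm (hq (i+1) (by omega) (by omega)))

lemma one_sub_ne {n : ℕ} (hq : ∀ j, 1 ≤ j → j ≤ n → q ^ j ≠ 1) {k : ℕ} (h1 : 1 ≤ k)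
    (hk : k ≤ n) : (1 : K) - q ^ k ≠ 0 :=
  sub_ne_zero.mpr (Ne.symm (hq k h1 hk))

lemma qbin_zero (m : ℕ) : qbin q m 0 = 1 := by simp [qbin]

lemma qbin_of_gt {m k : ℕ} (h : m < k) : qbin q m k = 0 := by
  simp [qbin, Nat.not_le.mpr h]

lemma qbin_diag {n : ℕ} (hq : ∀ j, 1 ≤ j → j ≤ n → q ^ j ≠ 1) : qbin q n n = 1 := by
  rw [qbin, if_pos le_rfl]
  have h : (∏ i ∈ Finset.range n, (1 - q ^ (n - i))) = ∏ i ∈ Finset.range n, (1 - q ^ (i + 1)) := by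
    rw [← Finset.prod_range_reflect (fun i => (1 - q ^ (i + 1))) n]
    apply Finset.prod_congr rfl
    intro i hi
    simp only [mem_range] at hi
    have h2 : n - 1 - i + 1 = n - i := by omega
    rw [h2]
  rw [h, div_self (den_ne hq le_rfl)]

lemma qbin_ratio {n j : ℕ} (hq : ∀ i, 1 ≤ i → i ≤ n → q ^ i ≠ 1) (h1 : 1 ≤ j) (hjn : j ≤ n) :
    qbin q n j * (1 - q ^ j) = qbin q n (j - 1) * (1 - q ^ (n + 1 - j)) := by
  obtain ⟨m, rfl⟩ : ∃ m, j = m + 1 := ⟨j - 1, by omega⟩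
  simp only [Nat.add_sub_cancel]
  rw [qbin, if_pos hjn, qbin, if_pos (by omega : m ≤ n)]
  rw [Finset.prod_range_succ, Finset.prod_range_succ]
  have hd : (∏ i ∈ range m, (1 - q ^ (i + 1))) ≠ 0 := den_ne hq (by omega)
  have hm1 : (1 : K) - q ^ (m + 1) ≠ 0 := one_sub_ne hq (by omega) hjn
  have he : n + 1 - (m + 1) = n - m := by omega
  rw [he]
  field_simp

lemma qbin_pascal {n k : ℕ} (hq : ∀ i, 1 ≤ i → i ≤ n + 1 → q ^ i ≠ 1) (h1 : 1 ≤ k) :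
    qbin q (n + 1) k = qbin q n (k - 1) + q ^ k * qbin q n k := by
  rcases Nat.lt_or_ge (n + 1) k with h | h
  · rw [qbin_of_gt h, qbin_of_gt (by omega), qbin_of_gt (by omega)]
    ring
  rcases Nat.eq_or_lt_of_le h with h' | h'
  · -- k = n + 1
    subst h'
    rw [qbin_diag hq, Nat.add_sub_cancel, qbin_diag (fun i a b => hq i a (by omega)),
      qbin_of_gt (by omega)]
    ring
  · -- k ≤ n
    have hkn : k ≤ n := by omega
    obtain ⟨m, rfl⟩ : ∃ m, k = m + 1 := ⟨k - 1, by omega⟩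
    simp only [Nat.add_sub_cancel]
    rw [qbin, if_pos (by omega : m + 1 ≤ n + 1), qbin, if_pos (by omega : m ≤ n),
      qbin, if_pos hkn]
    rw [Finset.prod_range_succ' (fun i => (1 - q ^ (n + 1 - i))) m]
    simp only [Nat.succ_sub_succ_eq_sub, Nat.sub_zero]
    rw [Finset.prod_range_succ (fun i => (1 - q ^ (n - i))) m]
    rw [Finset.prod_range_succ (fun i => (1 - q ^ (i + 1))) m]
    have hd : (∏ i ∈ range m, (1 - q ^ (i + 1))) ≠ 0 := den_ne (fun i a b => hq i a (by omega)) (by omega : m ≤ n)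
    have hm1 : (1 : K) - q ^ (m + 1) ≠ 0 := one_sub_ne hq (by omega) (by omega)
    have hpow : (1:K) - q ^ (n+1) = 1 - q ^ (m + 1) * q ^ (n - m) := by
      rw [← pow_add]
      congr 2
      omega
    rw [hpow]
    field_simp
    ring

/-- The summand coefficient in the key lemma. -/
noncomputable def hh (q : K) (n k : ℕ) : K :=
  (-1) ^ k * qbin q n (k - 1) * q ^ k.choose 2 * (q⁻¹) ^ (n * k)

lemma hh_ratio (hq0 : q ≠ 0) {n j : ℕ} (hq : ∀ i, 1 ≤ i → i ≤ n → q ^ i ≠ 1)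
    (h1 : 1 ≤ j) (hjn : j ≤ n) :
    hh q n (j + 1) * (1 - q ^ j) * q ^ n = -(hh q n j) * q ^ j * (1 - q ^ (n + 1 - j)) := by
  have hr := qbin_ratio hq h1 hjn
  simp only [hh, Nat.add_sub_cancel]
  have hc : (j + 1).choose 2 = j.choose 2 + j := by
    rw [Nat.choose_succ_succ, Nat.choose_one_right, Nat.add_comm]
  have hm : n * (j + 1) = n * j + n := by ring
  have hinv : (q⁻¹ : K) ^ n * q ^ n = 1 := by
    rw [← mul_pow, inv_mul_cancel₀ hq0, one_pow]
  rw [hc, hm]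
  simp only [pow_add, pow_succ, pow_zero, one_mul]
  linear_combination (-((-1:K) ^ j * q ^ j.choose 2 * q ^ j * (q⁻¹) ^ (n*j) * (q⁻¹) ^ n * q ^ n)) * hr
    + (-((-1:K) ^ j * q ^ j.choose 2 * q ^ j * (q⁻¹) ^ (n*j) * qbin q n (j-1) * (1 - q ^ (n+1-j)))) * hinv

lemma tail_lemma (hq0 : q ≠ 0) {n : ℕ} (hq : ∀ i, 1 ≤ i → i ≤ n + 1 → q ^ i ≠ 1) :
    ∀ d, d ≤ n →
      ∑ k ∈ Icc (n + 1 - d) (n + 1), hh q n k / (1 - q ^ k)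
        = q ^ d * hh q n (n + 1 - d) / (1 - q ^ (n + 1)) := by
  intro d
  induction d with
  | zero =>
    intro _
    simp only [Nat.sub_zero, Icc_self, sum_singleton, pow_zero, one_mul]
  | succ d ih =>
    intro hd
    have hdn : d ≤ n := by omega
    set j := n - d with hj
    have hj1 : 1 ≤ j := by omega
    have hjn : j ≤ n := by omega
    have hne : n + 1 - (d + 1) = j := by omega
    have hne2 : n + 1 - d = j + 1 := by omega
    rw [hne]
    have hsplit : Icc j (n + 1) = insert j (Icc (j + 1) (n + 1)) := by
      rw [Finset.Icc_add_one_left_eq_Ioc, Finset.Ioc_insert_left (by omega)]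
    rw [hsplit, Finset.sum_insert (by simp [Finset.mem_Icc])]
    have ih' := ih hdn
    rw [hne2] at ih'
    rw [ih']
    -- algebra
    have h1 : (1:K) - q ^ j ≠ 0 := one_sub_ne hq hj1 (by omega)
    have h2 : (1:K) - q ^ (n + 1) ≠ 0 := one_sub_ne hq (by omega) le_rfl
    have hr := hh_ratio hq0 (fun i a b => hq i a (by omega)) hj1 hjn
    have e1 : q ^ j * q ^ (n - j) = q ^ n := by rw [← pow_add]; congr 1; omega
    have e2 : q ^ (n + 1 - j) = q ^ (n - j) * q := by rw [← pow_succ]; congr 1; omega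
    have e3 : q ^ (n + 1) = q ^ j * q ^ (n - j) * q := by rw [e1, ← pow_succ]
    have e4 : (d : ℕ) = n - j := by omega
    rw [e4] at *
    have e5 : q ^ (n - j + 1) = q ^ (n - j) * q := by rw [pow_succ]
    rw [e2] at hr
    rw [e3]
    rw [e5]
    set x := hh q n j
    set y := hh q n (j + 1)
    set A := q ^ j with hA
    set B := q ^ (n - j) with hB
    have hAne : A ≠ 0 := pow_ne_zero _ hq0
    have hBne : B ≠ 0 := pow_ne_zero _ hq0
    rw [← e1] at hr
    rw [e3] at h2
    -- hr : y * (1 - A) * (A * B) = -x * A * (1 - B * q)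
    have hr2 : y * (1 - A) * B = -x * (1 - B * q) :=
      mul_right_cancel₀ hAne (by linear_combination hr)
    field_simp
    rw [hA, hB] at hr2
    linear_combination hr2

lemma Gval (hq0 : q ≠ 0) {n : ℕ} (hq : ∀ i, 1 ≤ i → i ≤ n + 1 → q ^ i ≠ 1) :
    ∀ r : ℕ, ∑ k ∈ Icc 1 (n + 1), hh q n k * (mhsq q 1 r k / (1 - q ^ k))
      = -q ^ (r * (n + 1)) / (1 - q ^ (n + 1)) ^ (r + 1) := by
  have h2 : (1 : K) - q ^ (n + 1) ≠ 0 := one_sub_ne hq (by omega) le_rfl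
  intro r
  induction r with
  | zero =>
    have ht := tail_lemma hq0 hq n le_rfl
    have he : n + 1 - n = 1 := by omega
    rw [he] at ht
    have e : ∀ k, mhsq q 1 0 k = (1 : K) := fun _ => rfl
    calc ∑ k ∈ Icc 1 (n + 1), hh q n k * (mhsq q 1 0 k / (1 - q ^ k))
        = ∑ k ∈ Icc 1 (n + 1), hh q n k / (1 - q ^ k) := by
          apply sum_congr rfl; intro k _; rw [e, one_div, ← div_eq_mul_inv]
      _ = q ^ n * hh q n 1 / (1 - q ^ (n + 1)) := ht
      _ = -q ^ (0 * (n + 1)) / (1 - q ^ (n + 1)) ^ (0 + 1) := by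
          have hh1 : hh q n 1 = -(q⁻¹) ^ n := by
            simp [hh, qbin, Nat.choose]
          rw [hh1]
          have : q ^ n * -(q⁻¹) ^ n = -1 := by
            rw [inv_pow, mul_neg, mul_inv_cancel₀ (pow_ne_zero _ hq0)]
          rw [this]
          norm_num
  | succ r ih =>
    have hstep : ∀ k, mhsq q 1 (r + 1) k = ∑ j ∈ Icc 1 k, q ^ j / (1 - q ^ j) * mhsq q 1 r j := by
      intro k
      simp [mhsq]
    calc ∑ k ∈ Icc 1 (n + 1), hh q n k * (mhsq q 1 (r + 1) k / (1 - q ^ k))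
        = ∑ k ∈ Icc 1 (n + 1), ∑ j ∈ Icc 1 k,
            (hh q n k / (1 - q ^ k)) * (q ^ j / (1 - q ^ j) * mhsq q 1 r j) := by
          apply sum_congr rfl; intro k _
          rw [hstep, div_eq_mul_inv, Finset.sum_mul, Finset.mul_sum]
          apply sum_congr rfl; intro j _
          ring
      _ = ∑ j ∈ Icc 1 (n + 1), ∑ k ∈ Icc j (n + 1),
            (hh q n k / (1 - q ^ k)) * (q ^ j / (1 - q ^ j) * mhsq q 1 r j) := by
          have := Finset.sum_Ico_Ico_comm 1 (n + 1 + 1)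
            (fun i j => (hh q n j / (1 - q ^ j)) * (q ^ i / (1 - q ^ i) * mhsq q 1 r i))
          simp only [Finset.Ico_add_one_right_eq_Icc] at this
          rw [← this]
      _ = ∑ j ∈ Icc 1 (n + 1),
            (q ^ (n + 1 - j) * hh q n j / (1 - q ^ (n + 1)))
              * (q ^ j / (1 - q ^ j) * mhsq q 1 r j) := by
          apply sum_congr rfl; intro j hj
          simp only [mem_Icc] at hj
          rw [← Finset.sum_mul]
          congr 1
          have ht := tail_lemma hq0 hq (n + 1 - j) (by omega)
          have he : n + 1 - (n + 1 - j) = j := by omega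
          rw [he] at ht
          exact ht
      _ = ∑ j ∈ Icc 1 (n + 1),
            (q ^ (n + 1) / (1 - q ^ (n + 1))) * (hh q n j * (mhsq q 1 r j / (1 - q ^ j))) := by
          apply sum_congr rfl; intro j hj
          simp only [mem_Icc] at hj
          have hpow : q ^ (n + 1 - j) * q ^ j = q ^ (n + 1) := by
            rw [← pow_add]; congr 1; omega
          rw [← hpow]
          ring
      _ = -q ^ ((r + 1) * (n + 1)) / (1 - q ^ (n + 1)) ^ (r + 1 + 1) := by
          rw [← Finset.mul_sum, ih]
          have hpow : q ^ ((r + 1) * (n + 1)) = q ^ (n + 1) * q ^ (r * (n + 1)) := by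
            rw [← pow_add]; congr 1; ring
          rw [hpow, pow_succ]
          field_simp
          ring

lemma mhsq_one (hq0 : q ≠ 0) : ∀ r : ℕ, mhsq q (1 : ℕ) r 1 = (q / (1 - q)) ^ r := by
  intro r
  induction r with
  | zero => simp [mhsq]
  | succ r ih =>
    show ∑ j ∈ Icc 1 1, q ^ j / (1 - q ^ j) ^ 1 * mhsq q 1 r j = _
    rw [Finset.Icc_self, Finset.sum_singleton, ih, pow_one, pow_one, pow_succ]
    ring

lemma main_lemma (hq0 : q ≠ 0) :
    ∀ m : ℕ, (∀ j, 1 ≤ j → j ≤ m + 1 → q ^ j ≠ 1) → ∀ r : ℕ,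
      ∑ k ∈ Icc 1 (m + 1), (-1 : K) ^ k * qbin q (m + 1) k * q ^ k.choose 2 * (q⁻¹) ^ (m * k)
          * (mhsq q 1 r k / (1 - q ^ k))
        = -∑ k ∈ Icc 1 (m + 1), q ^ (r * k) / (1 - q ^ k) ^ (r + 1) := by
  intro m
  induction m with
  | zero =>
    intro hq r
    have h1 : (1 : K) - q ≠ 0 := by
      have := one_sub_ne hq le_rfl le_rfl
      rwa [pow_one] at this
    rw [Finset.Icc_self, Finset.sum_singleton, Finset.sum_singleton]
    rw [qbin_diag hq, mhsq_one hq0 r]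
    have hc : Nat.choose 1 2 = 0 := rfl
    rw [hc]
    simp only [Nat.zero_mul, pow_zero, pow_one, mul_one, Nat.mul_one, one_mul]
    rw [div_pow, pow_succ, div_div]
    ring
  | succ m ih =>
    intro hq r
    have hq' : ∀ j, 1 ≤ j → j ≤ m + 1 → q ^ j ≠ 1 := fun j a b => hq j a (by omega)
    have key : ∀ k ∈ Icc 1 (m + 2),
        (-1 : K) ^ k * qbin q (m + 2) k * q ^ k.choose 2 * (q⁻¹) ^ ((m + 1) * k)
            * (mhsq q 1 r k / (1 - q ^ k))
          = hh q (m + 1) k * (mhsq q 1 r k / (1 - q ^ k))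
            + (-1 : K) ^ k * qbin q (m + 1) k * q ^ k.choose 2 * (q⁻¹) ^ (m * k)
                * (mhsq q 1 r k / (1 - q ^ k)) := by
      intro k hk
      simp only [mem_Icc] at hk
      rw [qbin_pascal hq hk.1]
      have hsplit : (q⁻¹ : K) ^ ((m + 1) * k) = (q⁻¹) ^ (m * k) * (q⁻¹) ^ k := by
        rw [← pow_add]; congr 1; ring
      have hcan : q ^ k * (q⁻¹ : K) ^ k = 1 := by
        rw [inv_pow, mul_inv_cancel₀ (pow_ne_zero _ hq0)]
      rw [hh, hsplit]
      calc (-1:K) ^ k * (qbin q (m + 1) (k - 1) + q ^ k * qbin q (m + 1) k) * q ^ k.choose 2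
            * ((q⁻¹) ^ (m * k) * (q⁻¹) ^ k) * (mhsq q 1 r k / (1 - q ^ k))
          = (-1:K) ^ k * qbin q (m + 1) (k - 1) * q ^ k.choose 2
              * ((q⁻¹) ^ (m * k) * (q⁻¹) ^ k) * (mhsq q 1 r k / (1 - q ^ k))
            + ((-1:K) ^ k * qbin q (m + 1) k * q ^ k.choose 2 * (q⁻¹) ^ (m * k)
                * (mhsq q 1 r k / (1 - q ^ k))) * (q ^ k * (q⁻¹) ^ k) := by ring
        _ = _ := by rw [hcan, mul_one]
    rw [Finset.sum_congr rfl key, Finset.sum_add_distrib]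
    rw [Gval hq0 hq r]
    have htop : ((-1 : K) ^ (m + 2) * qbin q (m + 1) (m + 2) * q ^ (m + 2).choose 2
        * (q⁻¹) ^ (m * (m + 2)) * (mhsq q 1 r (m + 2) / (1 - q ^ (m + 2)))) = 0 := by
      rw [qbin_of_gt (by omega)]
      ring
    rw [show (m + 2) = (m + 1) + 1 from rfl] at *
    rw [Finset.sum_Icc_succ_top (by omega : 1 ≤ m + 1 + 1)]
    rw [Finset.sum_Icc_succ_top (by omega : 1 ≤ m + 1 + 1) (fun k => q ^ (r * k) / (1 - q ^ k) ^ (r + 1))]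
    rw [htop, add_zero, ih hq' r]
    ring

end Aux16

theorem stmt16 {K : Type*} [Field K] (n : ℕ) (hn : 1 ≤ n) (r : ℕ) (q : K) (hq0 : q ≠ 0)
    (hq : ∀ j, 1 ≤ j → j ≤ n → q ^ j ≠ 1) :
    ∑ k ∈ Finset.Icc 1 n,
        (-1 : K) ^ k * qbin q n k * q ^ ((k.choose 2 : ℤ) - (n - 1 : ℤ) * k) *
          (mhsq q 1 r k / (1 - q ^ k))
      = -∑ k ∈ Finset.Icc 1 n, q ^ (r * k) / (1 - q ^ k) ^ (r + 1) := by
  obtain ⟨m, rfl⟩ : ∃ m, n = m + 1 := ⟨n - 1, by omega⟩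
  have hz : ∀ k : ℕ, q ^ ((k.choose 2 : ℤ) - ((m + 1 : ℕ) - 1 : ℤ) * k)
      = q ^ k.choose 2 * (q⁻¹) ^ (m * k) := by
    intro k
    have he : ((k.choose 2 : ℤ) - ((m + 1 : ℕ) - 1 : ℤ) * k)
        = (k.choose 2 : ℤ) - ((m * k : ℕ) : ℤ) := by push_cast; ring
    rw [he, zpow_sub₀ hq0, zpow_natCast, zpow_natCast, div_eq_mul_inv, inv_pow]
  calc ∑ k ∈ Finset.Icc 1 (m + 1),
        (-1 : K) ^ k * qbin q (m + 1) k * q ^ ((k.choose 2 : ℤ) - ((m + 1 : ℕ) - 1 : ℤ) * k) *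
          (mhsq q 1 r k / (1 - q ^ k))
      = ∑ k ∈ Finset.Icc 1 (m + 1),
          (-1 : K) ^ k * qbin q (m + 1) k * q ^ k.choose 2 * (q⁻¹) ^ (m * k)
            * (mhsq q 1 r k / (1 - q ^ k)) := by
        apply Finset.sum_congr rfl; intro k _
        rw [hz k]
        ring
    _ = -∑ k ∈ Finset.Icc 1 (m + 1), q ^ (r * k) / (1 - q ^ k) ^ (r + 1) :=
        Aux16.main_lemma hq0 m hq r
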